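/- Let C be a connected subset of ℝ² with more than one point. Then for every x in the closure of C and every ρ with 0 < ρ < diam(C)/2, one has ℋ¹(C ∩ B_ρ(x)) ≥ ρ, where B_ρ(x) is the open ball of centre x and radius ρ. -/

import Mathlib

open MeasureTheory

noncomputable section

/-- The plane `ℝ²`. -/
abbrev E2 : Type := EuclideanSpace ℝ (Fin 2)

/-- If `C ⊆ ℝ²` is connected with more than one point, then for every `x` in the closure
of `C` and every `ρ` with `0 < ρ < diam(C)/2`, one has `ℋ¹(C ∩ B_ρ(x)) ≥ ρ`. -/
theorem hausdorff_measure_ball_lower_bound (C : Set E2) (hC : IsConnected C)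
    (hC2 : C.Nontrivial) (x : E2) (hx : x ∈ closure C)
    (ρ : ℝ) (hρ : 0 < ρ) (hρ2 : ENNReal.ofReal (2 * ρ) < EMetric.diam C) :
    ENNReal.ofReal ρ ≤ μH[1] (C ∩ Metric.ball x ρ) := by
  set f : E2 → ℝ := fun y => dist y x with hf
  have hlip : LipschitzWith 1 f := LipschitzWith.dist_left x
  -- there is a point of C at distance > ρ from x
  obtain ⟨a, ha, b, hb, hab⟩ : ∃ a ∈ C, ∃ b ∈ C, ENNReal.ofReal (2 * ρ) < edist a b := by
    by_contra h
    push_neg at h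
    exact absurd (EMetric.diam_le fun a ha b hb => h a ha b hb) (not_le.mpr hρ2)
  have hab' : 2 * ρ < dist a b := by
    rw [edist_dist] at hab
    exact (ENNReal.ofReal_lt_ofReal_iff_of_nonneg (by positivity)).mp hab
  have hfar : ∃ c ∈ C, ρ < f c := by
    by_contra h
    push_neg at h
    have := dist_triangle a x b
    have hax := h a ha
    have hbx := h b hb
    simp only [hf] at hax hbx
    rw [dist_comm x b] at this
    nlinarith [dist_comm a x ▸ hax]
  obtain ⟨c, hcC, hc⟩ := hfar
  -- f '' C is connected in ℝ, hence ord-connected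
  have hconn : IsConnected (f '' C) := hC.image f (hlip.continuous.continuousOn)
  have hord := hconn.isPreconnected.ordConnected
  -- Ioo 0 ρ ⊆ f '' (C ∩ ball x ρ)
  have hsub : Set.Ioo 0 ρ ⊆ f '' (C ∩ Metric.ball x ρ) := by
    rintro t ⟨ht0, htρ⟩
    -- point of C with f < t
    obtain ⟨y, hyC, hyt⟩ : ∃ y ∈ C, dist y x < t := by
      obtain ⟨y, hyC, hy⟩ := Metric.mem_closure_iff.mp hx t ht0
      exact ⟨y, hyC, by rwa [dist_comm]⟩
    have h1 : f y ≤ t := le_of_lt hyt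
    have h2 : t ≤ f c := le_of_lt (htρ.trans hc)
    have : t ∈ f '' C := hord.out ⟨y, hyC, rfl⟩ ⟨c, hcC, rfl⟩ ⟨h1, h2⟩
    obtain ⟨z, hzC, hzt⟩ := this
    exact ⟨z, ⟨hzC, by show f z < ρ; rw [hzt]; exact htρ⟩, hzt⟩
  calc ENNReal.ofReal ρ = μH[1] (Set.Ioo (0:ℝ) ρ) := by
        rw [MeasureTheory.hausdorffMeasure_real, Real.volume_Ioo]; simp
    _ ≤ μH[1] (f '' (C ∩ Metric.ball x ρ)) := measure_mono hsub
    _ ≤ (1:NNReal) ^ (1:ℝ) * μH[1] (C ∩ Metric.ball x ρ) :=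
        hlip.hausdorffMeasure_image_le zero_le_one _
    _ = μH[1] (C ∩ Metric.ball x ρ) := by simp
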